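/- Define a 1-form-valued frame on ℝ^7 (coordinates x_1,…,x_7) by b^1 = dx_1 + r_6 dx_6 + r_7 dx_7, b^2 = dx_2 + s_7 dx_7, b^3 = dx_3, b^4 = dx_4 + u_6 dx_6 + u_7 dx_7, b^5 = dx_5, b^6 = e^{w_6} dx_6, b^7 = dx_7, with w_6 = (1/2) x_6 x_7^2, u_6 = u_7 = 0, s_7 = x_2 x_6 x_7 + (κ x_6 − x_6 x_7)(x_5 + κ^{-1} x_3), r_7 = x_1 x_6 x_7 + 2√2 x_4 (κ x_6 − x_6 x_7) − x_5·0·e^{−w_6}, r_6 = x_3(κ x_6 − x_6 x_7) e^{w_6} + x_5^2/2 (κ = ±1). Then the structure equations db^1 = −θ¹_j ∧ b^j etc. hold with a connection form θ taking values in the Lie algebra ℝ·I ⋉ Z_5(κ); equivalently, the PDE system (r_7)_{x_1} = (w_6)_{x_7}, (r_7)_{x_3} = √2 (s_7)_{x_4}, (r_7)_{x_4} = 2√2 (s_7)_{x_5} + [(u_6)_{x_7} − (u_7)_{x_6}] e^{−w_6}, (r_7)_{x_5} = κ (r_7)_{x_3} − (t_7)_{x_6} e^{−w_6}, (s_7)_{x_2}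 = (w_6)_{x_7}, (s_7)_{x_5} = κ (s_7)_{x_3} is satisfied by these functions (with t_7 = 0). -/

import Mathlib

open Matrix Real

noncomputable section

/-- σ(z) : 2×3 matrix. -/
def sigM (z : Fin 4 → ℝ) : Matrix (Fin 2) (Fin 3) ℝ :=
  !![z 1, Real.sqrt 2 * z 2, z 3;
     z 0, Real.sqrt 2 * z 1, z 2]

/-- ρ(A) : 3×3 matrix. -/
def rhoM (A : Matrix (Fin 2) (Fin 2) ℝ) : Matrix (Fin 3) (Fin 3) ℝ :=
  !![A 0 0 - A 1 1, -(Real.sqrt 2) * A 0 1, 0;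
     -(Real.sqrt 2) * A 1 0, 0, -(Real.sqrt 2) * A 0 1;
     0, -(Real.sqrt 2) * A 1 0, -(A 0 0) + A 1 1]

/-- h(A,z,c) : the 7×7 block matrix [[A, σ(z), U(c)],[0, ρ(A), σ(z)^*],[0,0,−Aᵀ]]. -/
def hM (A : Matrix (Fin 2) (Fin 2) ℝ) (z : Fin 4 → ℝ) (c : ℝ) : Matrix (Fin 7) (Fin 7) ℝ :=
  !![A 0 0, A 0 1, z 1, Real.sqrt 2 * z 2, z 3, 0, -c;
     A 1 0, A 1 1, z 0, Real.sqrt 2 * z 1, z 2, c, 0;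
     0, 0, A 0 0 - A 1 1, -(Real.sqrt 2) * A 0 1, 0, -(z 3), -(z 2);
     0, 0, -(Real.sqrt 2) * A 1 0, 0, -(Real.sqrt 2) * A 0 1, Real.sqrt 2 * z 2, Real.sqrt 2 * z 1;
     0, 0, 0, -(Real.sqrt 2) * A 1 0, -(A 0 0) + A 1 1, -(z 1), -(z 0);
     0, 0, 0, 0, 0, -(A 0 0), -(A 1 0);
     0, 0, 0, 0, 0, -(A 0 1), -(A 1 1)]

/-- Gram matrix of g with g(b1,b6)=g(b2,b7)=g(b3,b5)=1, g(b4,b4)=−1. -/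
def G1 : Matrix (Fin 7) (Fin 7) ℝ :=
  !![0,0,0,0,0,1,0;
     0,0,0,0,0,0,1;
     0,0,0,0,1,0,0;
     0,0,0,-1,0,0,0;
     0,0,1,0,0,0,0;
     1,0,0,0,0,0,0;
     0,1,0,0,0,0,0]

/-- Gram matrix of ⟨x,y⟩ = 2(x1y6+x6y1+x2y7+x7y2+x3y5+x5y3) − x4y4. -/
def G2 : Matrix (Fin 7) (Fin 7) ℝ :=
  !![0,0,0,0,0,2,0;
     0,0,0,0,0,0,2;
     0,0,0,0,2,0,0;
     0,0,0,-1,0,0,0;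
     0,0,2,0,0,0,0;
     2,0,0,0,0,0,0;
     0,2,0,0,0,0,0]

/-- The 14-parameter family of matrices spanning 𝔤₂*. -/
def Mg (s : Fin 14 → ℝ) : Matrix (Fin 7) (Fin 7) ℝ :=
  !![s 0 + s 3, -(s 9), s 8, Real.sqrt 2 * s 5, -(s 11), 0, -(s 10);
     -(s 7), s 0, s 1, Real.sqrt 2 * s 8, s 5, s 10, 0;
     s 6, s 2, s 3, Real.sqrt 2 * s 9, 0, s 11, -(s 5);
     Real.sqrt 2 * s 4, Real.sqrt 2 * s 6, Real.sqrt 2 * s 7, 0, Real.sqrt 2 * s 9, Real.sqrt 2 * s 5, Real.sqrt 2 * s 8;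
     -(s 13), s 4, 0, Real.sqrt 2 * s 7, -(s 3), -(s 8), -(s 1);
     0, s 12, s 13, Real.sqrt 2 * s 4, -(s 6), -(s 0) - s 3, s 7;
     -(s 12), 0, -(s 4), Real.sqrt 2 * s 6, -(s 2), s 9, -(s 0)]

/-- standard basis vector b_i of ℝ^7. -/
def bb (i : Fin 7) : Fin 7 → ℝ := Pi.single i 1

/-- determinant of the (i,j,k)-coordinates of X,Y,Z : the value b^i∧b^j∧b^k (X,Y,Z). -/
def d3 (X Y Z : Fin 7 → ℝ) (i j k : Fin 7) : ℝ :=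
  Matrix.det !![X i, X j, X k; Y i, Y j, Y k; Z i, Z j, Z k]

/-- The generic 3-form ω = √2(−b^{157}+b^{236}) − b^4∧(b^{16}−b^{27}−b^{35}), as a
function of three vectors. -/
def om (X Y Z : Fin 7 → ℝ) : ℝ :=
  Real.sqrt 2 * (-(d3 X Y Z 0 4 6) + d3 X Y Z 1 2 5)
    - (d3 X Y Z 3 0 5 - d3 X Y Z 3 1 6 - d3 X Y Z 3 2 4)

/-- the value of α ∧ β ∧ γ (α,β 2-forms, γ a 3-form) on the standard basis of ℝ^7. -/
def wedge223 (α β : (Fin 7 → ℝ) → (Fin 7 → ℝ) → ℝ)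
    (γ : (Fin 7 → ℝ) → (Fin 7 → ℝ) → (Fin 7 → ℝ) → ℝ) : ℝ :=
  (1 / 24 : ℝ) * ∑ p : Equiv.Perm (Fin 7),
    ((Equiv.Perm.sign p : ℤ) : ℝ) * α (bb (p 0)) (bb (p 1)) * β (bb (p 2)) (bb (p 3))
      * γ (bb (p 4)) (bb (p 5)) (bb (p 6))

/-- the matrix of the third symmetric power of the standard representation of 𝔤𝔩(2,ℝ),
in the monomial basis (x³, x²y, xy², y³). -/
def sym3 (A : Matrix (Fin 2) (Fin 2) ℝ) : Matrix (Fin 4) (Fin 4) ℝ :=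
  !![3 * A 0 0, A 0 1, 0, 0;
     3 * A 1 0, 2 * A 0 0 + A 1 1, 2 * A 0 1, 0;
     0, 2 * A 1 0, A 0 0 + 2 * A 1 1, 3 * A 0 1;
     0, 0, A 1 0, 3 * A 1 1]

/-- partial derivative in the i-th coordinate direction. -/
def pd (i : Fin 7) (F : (Fin 7 → ℝ) → ℝ) (x : Fin 7 → ℝ) : ℝ :=
  fderiv ℝ F x (Pi.single i 1)

/-- w₆ = ½ x₆ x₇². (Coordinates x₁,…,x₇ are indexed 0,…,6.) -/
def w6 (x : Fin 7 → ℝ) : ℝ := (1 / 2) * x 5 * (x 6) ^ 2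

/-- r₆ = x₃(κx₆ − x₆x₇)e^{w₆} + x₅²/2. -/
def r6A (κ : ℝ) (x : Fin 7 → ℝ) : ℝ :=
  x 2 * (κ * x 5 - x 5 * x 6) * Real.exp (w6 x) + (x 4) ^ 2 / 2

/-- r₇ = x₁x₆x₇ + 2√2 x₄(κx₆ − x₆x₇) − x₅·0·e^{−w₆}. -/
def r7A (κ : ℝ) (x : Fin 7 → ℝ) : ℝ :=
  x 0 * x 5 * x 6 + 2 * Real.sqrt 2 * x 3 * (κ * x 5 - x 5 * x 6)
    - x 4 * 0 * Real.exp (-(w6 x))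

/-- s₇ = x₂x₆x₇ + (κx₆ − x₆x₇)(x₅ + κ⁻¹x₃). -/
def s7A (κ : ℝ) (x : Fin 7 → ℝ) : ℝ :=
  x 1 * x 5 * x 6 + (κ * x 5 - x 5 * x 6) * (x 4 + κ⁻¹ * x 2)

/-- t₇ = u₆ = u₇ = 0. -/
def zf : (Fin 7 → ℝ) → ℝ := fun _ => 0

/-- the connection form takes values in ℝ·I ⋉ Z₅(κ); equivalently the
listed PDE system holds for the given coframe functions. -/

lemma pd_eq (i : Fin 7) (F : (Fin 7 → ℝ) → ℝ) {L : (Fin 7 → ℝ) →L[ℝ] ℝ} (x : Fin 7 → ℝ)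
    (h : HasFDerivAt F L x) : pd i F x = L (Pi.single i 1) := by
  rw [pd, h.fderiv]

lemma hproj (j : Fin 7) (x : Fin 7 → ℝ) :
    HasFDerivAt (fun x : Fin 7 → ℝ => x j)
      ((ContinuousLinearMap.proj j : (Fin 7 → ℝ) →L[ℝ] ℝ)) x :=
  (ContinuousLinearMap.proj j : (Fin 7 → ℝ) →L[ℝ] ℝ).hasFDerivAt

lemma pd_zf (i : Fin 7) (x : Fin 7 → ℝ) : pd i zf x = 0 := by
  rw [pd_eq i zf x (hasFDerivAt_const (0 : ℝ) x)]; simp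

lemma w6_eq : w6 = fun x => (1 / 2 : ℝ) * x 5 * (x 6 * x 6) := by
  funext x; simp only [w6]; ring

lemma r7A_eq (κ : ℝ) : r7A κ = fun x =>
    x 0 * x 5 * x 6 + 2 * Real.sqrt 2 * x 3 * (κ * x 5 - x 5 * x 6) := by
  funext x; simp [r7A]

lemma s7A_eq (κ : ℝ) : s7A κ = fun x =>
    x 1 * x 5 * x 6 + (κ * x 5 - x 5 * x 6) * (x 4 + κ⁻¹ * x 2) := by
  rfl

theorem stmt_14 (κ : ℝ) (hκ : κ = 1 ∨ κ = -1) (x : Fin 7 → ℝ) :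
    pd 0 (r7A κ) x = pd 6 w6 x ∧
    pd 2 (r7A κ) x = Real.sqrt 2 * pd 3 (s7A κ) x ∧
    pd 3 (r7A κ) x =
      2 * Real.sqrt 2 * pd 4 (s7A κ) x + (pd 6 zf x - pd 5 zf x) * Real.exp (-(w6 x)) ∧
    pd 4 (r7A κ) x = κ * pd 2 (r7A κ) x - pd 5 zf x * Real.exp (-(w6 x)) ∧
    pd 1 (s7A κ) x = pd 6 w6 x ∧
    pd 4 (s7A κ) x = κ * pd 2 (s7A κ) x := by
  have hw : HasFDerivAt w6 _ x := w6_eq ▸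
    (show HasFDerivAt (fun x : Fin 7 → ℝ => (1 / 2 : ℝ) * x 5 * (x 6 * x 6)) _ x from
    (((hproj 5 x).const_mul (1/2 : ℝ)).mul ((hproj 6 x).mul (hproj 6 x))))
  have hr : HasFDerivAt (r7A κ) _ x := (r7A_eq κ) ▸
    (show HasFDerivAt (fun x : Fin 7 → ℝ =>
        x 0 * x 5 * x 6 + 2 * Real.sqrt 2 * x 3 * (κ * x 5 - x 5 * x 6)) _ x from
    ((((hproj 0 x).mul (hproj 5 x)).mul (hproj 6 x)).add
      ((((hproj 3 x)).const_mul (2 * Real.sqrt 2)).mul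
        (((hproj 5 x).const_mul κ).sub ((hproj 5 x).mul (hproj 6 x))))))
  have hs : HasFDerivAt (s7A κ) _ x := (s7A_eq κ) ▸
    (show HasFDerivAt (fun x : Fin 7 → ℝ =>
        x 1 * x 5 * x 6 + (κ * x 5 - x 5 * x 6) * (x 4 + κ⁻¹ * x 2)) _ x from
    ((((hproj 1 x).mul (hproj 5 x)).mul (hproj 6 x)).add
      ((((hproj 5 x).const_mul κ).sub ((hproj 5 x).mul (hproj 6 x))).mul
        ((hproj 4 x).add ((hproj 2 x).const_mul κ⁻¹)))))
  have hκ1 : κ * κ⁻¹ = 1 := by rcases hκ with h | h <;> rw [h] <;> norm_num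
  rw [pd_eq 0 (r7A κ) x hr, pd_eq 2 (r7A κ) x hr, pd_eq 3 (r7A κ) x hr,
    pd_eq 4 (r7A κ) x hr, pd_eq 1 (s7A κ) x hs, pd_eq 2 (s7A κ) x hs,
    pd_eq 3 (s7A κ) x hs, pd_eq 4 (s7A κ) x hs, pd_eq 6 w6 x hw,
    pd_zf 5 x, pd_zf 6 x]
  simp [Pi.single_apply]
  refine ⟨by ring, by ring, by ring, ?_⟩
  rw [mul_comm (κ * x 5 - x 5 * x 6) κ⁻¹, ← mul_assoc, hκ1, one_mul]
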